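/- Let O be a complete discrete valuation ring with maximal ideal m and residue field of size λ, and let k ≥ 1. If b, M ∈ O/m^k satisfy v(b) ≤ v(M) (where v is the reduced valuation taking values in {0,...,k}), then the number of elements c ∈ O/m^k with bc = M is exactly λ^{v(b)}. -/

import Mathlib

open scoped Classical

/-- The "reduced valuation" on `O ⧸ m ^ k`: the largest `i ≤ k` such that `a` lies in the
image of `m ^ i` under the reduction map `O → O ⧸ m ^ k`. -/
noncomputable def redVal {O : Type*} [CommRing O] (m : Ideal O) (k : ℕ)
    (a : O ⧸ m ^ k) : ℕ :=
  Nat.findGreatest (fun i => a ∈ (m ^ i).map (Ideal.Quotient.mk (m ^ k))) k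

lemma redVal_le {O : Type*} [CommRing O] (m : Ideal O) (k : ℕ) (a : O ⧸ m ^ k) :
    redVal m k a ≤ k := Nat.findGreatest_le k

lemma redVal_spec {O : Type*} [CommRing O] (m : Ideal O) (k : ℕ) (a : O ⧸ m ^ k)
    {i : ℕ} (hi : i ≤ redVal m k a) :
    a ∈ (m ^ i).map (Ideal.Quotient.mk (m ^ k)) := by
  have h0 : a ∈ (m ^ 0).map (Ideal.Quotient.mk (m ^ k)) := by
    simp [Ideal.one_eq_top, Ideal.map_top]
  have h := Nat.findGreatest_spec (P := fun i => a ∈ (m ^ i).map (Ideal.Quotient.mk (m ^ k)))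
    (Nat.zero_le k) h0
  exact Ideal.map_mono (Ideal.pow_le_pow_right hi) h

lemma redVal_is_greatest {O : Type*} [CommRing O] (m : Ideal O) (k : ℕ) (a : O ⧸ m ^ k)
    {i : ℕ} (h1 : redVal m k a < i) (h2 : i ≤ k) :
    a ∉ (m ^ i).map (Ideal.Quotient.mk (m ^ k)) :=
  Nat.findGreatest_is_greatest h1 h2

/-- In a DVR, `#(O ⧸ m ^ n) = #(O ⧸ m) ^ n` (as `Nat.card`, so with the convention
that infinite cardinalities give `0`). -/
lemma card_quot_pow {O : Type*} [CommRing O] [IsDomain O] [IsDiscreteValuationRing O] (n : ℕ) :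
    Nat.card (O ⧸ (IsLocalRing.maximalIdeal O) ^ n) =
      Nat.card (O ⧸ IsLocalRing.maximalIdeal O) ^ n := by
  have h := cardQuot_pow_of_prime (P := IsLocalRing.maximalIdeal O)
    (IsDiscreteValuationRing.not_a_field O) (i := n)
  simpa only [Submodule.cardQuot_apply] using h

/-- The annihilator of `ϖ ^ v` in `O ⧸ m ^ k` has the same cardinality as `O ⧸ m ^ v`. -/
lemma card_ann {O : Type*} [CommRing O] [IsDomain O] [IsDiscreteValuationRing O]
    {ϖ : O} (hϖ : Irreducible ϖ) {k v : ℕ} (hv : v ≤ k) :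
    Nat.card {c : O ⧸ (IsLocalRing.maximalIdeal O) ^ k |
        Ideal.Quotient.mk ((IsLocalRing.maximalIdeal O) ^ k) (ϖ ^ v) * c = 0} =
      Nat.card (O ⧸ (IsLocalRing.maximalIdeal O) ^ v) := by
  set m := IsLocalRing.maximalIdeal O with hm
  have hϖ0 : ϖ ≠ 0 := hϖ.ne_zero
  have hspan : ∀ n : ℕ, m ^ n = Ideal.span {ϖ ^ n} := fun n => by
    rw [hm, hϖ.maximalIdeal_eq, Ideal.span_singleton_pow]
  have hmk0 : ∀ x : O, Ideal.Quotient.mk (m ^ k) x = 0 ↔ ϖ ^ k ∣ x := fun x => by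
    rw [Ideal.Quotient.eq_zero_iff_mem, hspan, Ideal.mem_span_singleton]
  have hpow : ϖ ^ v * ϖ ^ (k - v) = ϖ ^ k := by rw [← pow_add, Nat.add_sub_cancel' hv]
  have hpow' : ϖ ^ (k - v) * ϖ ^ v = ϖ ^ k := by rw [← pow_add, Nat.sub_add_cancel hv]
  set f : O →ₗ[O] O ⧸ m ^ k :=
    ((m ^ k).mkQ).comp (LinearMap.mulRight O (ϖ ^ (k - v))) with hfdef
  have hf : ∀ x : O, f x = Ideal.Quotient.mk (m ^ k) (x * ϖ ^ (k - v)) := fun x => by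
    simp [hfdef, Submodule.mkQ_apply, Ideal.Quotient.mk_eq_mk]
  have hker : LinearMap.ker f = m ^ v := by
    ext x
    rw [LinearMap.mem_ker, hf, hmk0, hspan v, Ideal.mem_span_singleton, ← hpow]
    exact mul_dvd_mul_iff_right (pow_ne_zero _ hϖ0)
  have hrange : (LinearMap.range f : Set (O ⧸ m ^ k)) =
      {c | Ideal.Quotient.mk (m ^ k) (ϖ ^ v) * c = 0} := by
    ext c
    simp only [SetLike.mem_coe, LinearMap.mem_range, Set.mem_setOf_eq]
    constructor
    · rintro ⟨x, rfl⟩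
      rw [hf, ← map_mul, hmk0]
      exact ⟨x, by rw [← hpow]; ring⟩
    · intro hc
      obtain ⟨y, rfl⟩ := Ideal.Quotient.mk_surjective c
      rw [← map_mul, hmk0] at hc
      rw [← hpow', mul_comm (ϖ ^ v) y] at hc
      obtain ⟨x, rfl⟩ := (mul_dvd_mul_iff_right (pow_ne_zero v hϖ0)).mp hc
      exact ⟨x, by rw [hf, mul_comm]⟩
  rw [show {c : O ⧸ m ^ k | Ideal.Quotient.mk (m ^ k) (ϖ ^ v) * c = 0} =
      (LinearMap.range f : Set (O ⧸ m ^ k)) from hrange.symm]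
  exact (Nat.card_congr ((Submodule.quotEquivOfEq (m ^ v) (LinearMap.ker f) hker.symm).toEquiv.trans
    f.quotKerEquivRange.toEquiv)).symm

theorem stmt_0 {O : Type*} [CommRing O] [IsDomain O] [IsDiscreteValuationRing O]
    [IsAdicComplete (IsLocalRing.maximalIdeal O) O]
    (lam : ℕ) (hlam : Nat.card (O ⧸ IsLocalRing.maximalIdeal O) = lam)
    (k : ℕ) (hk : 1 ≤ k)
    (b M : O ⧸ (IsLocalRing.maximalIdeal O) ^ k)
    (hbM : redVal (IsLocalRing.maximalIdeal O) k b ≤ redVal (IsLocalRing.maximalIdeal O) k M) :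
    Nat.card {c : O ⧸ (IsLocalRing.maximalIdeal O) ^ k | b * c = M} =
      lam ^ redVal (IsLocalRing.maximalIdeal O) k b := by
  classical
  obtain ⟨ϖ, hϖ⟩ := IsDiscreteValuationRing.exists_irreducible O
  have hspan : ∀ n : ℕ, (IsLocalRing.maximalIdeal O) ^ n = Ideal.span {ϖ ^ n} := fun n => by
    rw [hϖ.maximalIdeal_eq, Ideal.span_singleton_pow]
  set v := redVal (IsLocalRing.maximalIdeal O) k b with hv
  set mk := Ideal.Quotient.mk ((IsLocalRing.maximalIdeal O) ^ k) with hmkdef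
  have hvk : v ≤ k := redVal_le _ k b
  -- lift of b
  obtain ⟨b₀, hb₀mem, hb₀⟩ := Ideal.mem_map_iff_of_surjective _
    Ideal.Quotient.mk_surjective |>.mp (redVal_spec _ k b le_rfl)
  obtain ⟨u, hu⟩ : ϖ ^ v ∣ b₀ := by rwa [hspan, Ideal.mem_span_singleton] at hb₀mem
  -- lift of M
  obtain ⟨M₀, hM₀mem, hM₀⟩ := Ideal.mem_map_iff_of_surjective _
    Ideal.Quotient.mk_surjective |>.mp (redVal_spec _ k M hbM)
  obtain ⟨N, hN⟩ : ϖ ^ v ∣ M₀ := by rwa [hspan, Ideal.mem_span_singleton] at hM₀mem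
  -- the key dichotomy: either `v = k` (and everything in sight is zero), or `b` is
  -- `ϖ ^ v` times a unit
  have hcase : (b = 0 ∧ M = 0 ∧ mk (ϖ ^ v) = 0) ∨
      (∃ w : Oˣ, b = mk (ϖ ^ v) * mk (w : O)) := by
    rcases eq_or_lt_of_le hvk with hvk' | hvk'
    · left
      have h1 : mk (ϖ ^ v) = 0 := by
        rw [hmkdef, Ideal.Quotient.eq_zero_iff_mem, hvk', hspan]
        exact Ideal.mem_span_singleton_self _
      refine ⟨?_, ?_, h1⟩
      · rw [← hb₀, hu, map_mul, h1, zero_mul]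
      · rw [← hM₀, hN, map_mul, h1, zero_mul]
    · right
      have hune : ¬ ϖ ∣ u := by
        intro ⟨t, ht⟩
        refine redVal_is_greatest _ k b (Nat.lt_succ_self v) hvk' ?_
        rw [← hb₀]
        refine Ideal.mem_map_of_mem _ ?_
        rw [hspan, Ideal.mem_span_singleton]
        exact ⟨t, by rw [hu, ht, pow_succ]; ring⟩
      have huIsUnit : IsUnit u := by
        by_contra h
        exact hune (by
          rw [← Ideal.mem_span_singleton, ← hϖ.maximalIdeal_eq]
          exact (IsLocalRing.mem_maximalIdeal _).mpr h)
      obtain ⟨w, rfl⟩ := huIsUnit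
      exact ⟨w, by rw [← hb₀, hu, map_mul]⟩
  -- a particular solution
  have hexists : ∃ c₀, b * c₀ = M := by
    rcases hcase with ⟨hb0, hM0, _⟩ | ⟨w, hbw⟩
    · exact ⟨0, by rw [hb0, zero_mul, hM0]⟩
    · refine ⟨mk ((↑w⁻¹ : O) * N), ?_⟩
      rw [hbw, ← map_mul, ← map_mul, ← hM₀, hN]
      congr 1
      have hw1 : (w : O) * (↑w⁻¹ : O) = 1 := w.mul_inv
      calc ϖ ^ v * ↑w * (↑w⁻¹ * N) = ϖ ^ v * N * ((w : O) * ↑w⁻¹) := by ring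
        _ = ϖ ^ v * N := by rw [hw1, mul_one]
  obtain ⟨c₀, hc₀⟩ := hexists
  -- the annihilator of `b` coincides with the annihilator of `ϖ ^ v`
  have hann : ∀ c, b * c = 0 ↔ mk (ϖ ^ v) * c = 0 := by
    intro c
    rcases hcase with ⟨hb0, _, hp0⟩ | ⟨w, hbw⟩
    · rw [hb0, hp0]
    · rw [hbw]
      have hwu : IsUnit (mk (w : O)) := (w.isUnit).map mk
      rw [mul_comm (mk (ϖ ^ v)), mul_assoc]
      exact hwu.mul_right_eq_zero
  -- the solution set is a coset of the annihilator
  have hSeq : {c : O ⧸ (IsLocalRing.maximalIdeal O) ^ k | b * c = M} =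
      (fun z => c₀ + z) '' {c | mk (ϖ ^ v) * c = 0} := by
    ext c
    simp only [Set.mem_setOf_eq, Set.mem_image]
    constructor
    · intro h
      exact ⟨c - c₀, (hann _).mp (by rw [mul_sub, h, hc₀, sub_self]), by ring⟩
    · rintro ⟨z, hz, rfl⟩
      rw [mul_add, hc₀, (hann z).mpr hz, add_zero]
  rw [Nat.card_coe_set_eq, hSeq, Set.ncard_image_of_injective _ (add_right_injective c₀),
    ← Nat.card_coe_set_eq, hmkdef, card_ann hϖ hvk, card_quot_pow, hlam]
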